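/- Let R = R(a_1,…,a_l) and R'' = R(a_1,…,a_l, a_{l+1},…,a_m) be nested top-l and top-m partial rankings in S_n (so R'' ⊆ R). Then for every σ ∈ R, A_{R''}(Π_{R''}(σ)) = Π_{R''}(A_R(σ)); i.e. the antithetic operator on R'' applied to the projection of σ onto R'' equals the projection onto R'' of the antithetic of σ in R. -/

import Mathlib

/-- The Kendall (tau) distance between two permutations of `Fin n`:
the number of pairs `(x, y)` with `x < y` on which `σ⁻¹` and `τ⁻¹`
disagree in relative order. -/
def kendallDist {n : ℕ} (σ τ : Equiv.Perm (Fin n)) : ℕ :=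
  (Finset.univ.filter (fun p : Fin n × Fin n =>
    p.1 < p.2 ∧ ¬((σ⁻¹ p.1 < σ⁻¹ p.2) ↔ (τ⁻¹ p.1 < τ⁻¹ p.2)))).card

/-- The top-`k` partial ranking determined by the items `a 0, …, a (k-1)`:
the set of full rankings (permutations) `σ` with `σ i = a i` for the first
`k` positions. -/
def topkFinset {n k : ℕ} (hk : k ≤ n) (a : Fin k → Fin n) :
    Finset (Equiv.Perm (Fin n)) :=
  Finset.univ.filter fun σ => ∀ i : Fin k, σ (Fin.castLE hk i) = a i

/-- The permutation of `Fin n` fixing the first `k` positions and reversing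
the order of the remaining `n - k` positions. -/
def revAfter (n k : ℕ) : Equiv.Perm (Fin n) :=
  Function.Involutive.toPerm
    (fun p => if _h : (p : ℕ) < k then p
      else ⟨n + k - 1 - (p : ℕ), by have := p.isLt; omega⟩)
    (by
      intro p
      have hp := p.isLt
      by_cases h : (p : ℕ) < k
      · simp [h]
      · have h2 : ¬ (n + k - 1 - (p : ℕ) < k) := by omega
        simp only [dif_neg h, dif_neg h2]
        ext
        simp
        omega)

/-- The antithetic permutation of `σ` relative to a top-`k` partial ranking:
the first `k` positions are unchanged and the remaining positions are
reversed, i.e. `A σ (k+j) = σ (n+1-j)` (in 1-indexed notation). -/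
def antithetic (n k : ℕ) (σ : Equiv.Perm (Fin n)) : Equiv.Perm (Fin n) :=
  σ * revAfter n k

lemma mem_topk_iff {n k : ℕ} {hk : k ≤ n} {a : Fin k → Fin n} {ρ : Equiv.Perm (Fin n)} :
    ρ ∈ topkFinset hk a ↔ ∀ i : Fin k, ρ (Fin.castLE hk i) = a i := by
  simp [topkFinset]

lemma inv_apply_a {n k : ℕ} {hk : k ≤ n} {a : Fin k → Fin n} {ρ : Equiv.Perm (Fin n)}
    (hρ : ρ ∈ topkFinset hk a) (i : Fin k) : ρ⁻¹ (a i) = Fin.castLE hk i := by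
  rw [← mem_topk_iff.mp hρ i]; simp

lemma inv_ge {n k : ℕ} {hk : k ≤ n} {a : Fin k → Fin n} {ρ : Equiv.Perm (Fin n)}
    (hρ : ρ ∈ topkFinset hk a) {x : Fin n} (hx : ∀ i, a i ≠ x) : k ≤ ((ρ⁻¹ x : Fin n) : ℕ) := by
  by_contra h
  push_neg at h
  have hx2 : ρ (Fin.castLE hk ⟨(ρ⁻¹ x : Fin n), h⟩) = x := by
    have : Fin.castLE hk ⟨((ρ⁻¹ x : Fin n) : ℕ), h⟩ = ρ⁻¹ x := by
      apply Fin.ext; simp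
    rw [this]; simp
  exact hx _ ((mem_topk_iff.mp hρ _).symm.trans hx2)

lemma apply_notin {n k : ℕ} {hk : k ≤ n} {a : Fin k → Fin n} {ρ : Equiv.Perm (Fin n)}
    (hρ : ρ ∈ topkFinset hk a) {p : Fin n} (hp : k ≤ (p : ℕ)) : ∀ i, a i ≠ ρ p := by
  intro i h
  have h2 : ρ (Fin.castLE hk i) = ρ p := (mem_topk_iff.mp hρ i).trans h
  have := ρ.injective h2
  have : ((Fin.castLE hk i : Fin n) : ℕ) = (p : ℕ) := congrArg Fin.val this
  simp at this
  omega

lemma lt_flip {α : Type*} [LinearOrder α] {u v s t : α}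
    (h : v < u ↔ t < s) (h1 : u ≠ v) (h2 : s ≠ t) : (u < v ↔ s < t) := by
  constructor
  · intro hl
    rcases lt_trichotomy s t with h3 | h3 | h3
    · exact h3
    · exact absurd h3 h2
    · exact absurd (h.mpr h3) (lt_asymm hl)
  · intro hl
    rcases lt_trichotomy u v with h3 | h3 | h3
    · exact h3
    · exact absurd h3 h1
    · exact absurd (h.mp h3) (lt_asymm hl)

lemma perm_eq_one {n m : ℕ} (c : Equiv.Perm (Fin n))
    (hfix : ∀ p : Fin n, (p : ℕ) < m → c p = p)
    (hmaps : ∀ p : Fin n, m ≤ (p : ℕ) → m ≤ ((c p : Fin n) : ℕ))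
    (hmono : ∀ p q : Fin n, m ≤ (p : ℕ) → p < q → c p < c q) : c = 1 := by
  have gen : ∀ (d : Equiv.Perm (Fin n)),
      (∀ p : Fin n, (p : ℕ) < m → d p = p) →
      (∀ p : Fin n, m ≤ (p : ℕ) → m ≤ ((d p : Fin n) : ℕ)) →
      (∀ p q : Fin n, m ≤ (p : ℕ) → p < q → d p < d q) →
      ∀ p : Fin n, (p : ℕ) ≤ ((d p : Fin n) : ℕ) := by
    intro d h1 h2 h3 p
    have key : ∀ N : ℕ, ∀ p : Fin n, (p : ℕ) ≤ N → (p : ℕ) ≤ ((d p : Fin n) : ℕ) := by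
      intro N
      induction N with
      | zero => intro p hp; omega
      | succ N ih =>
        intro p hp
        by_cases hpm : (p : ℕ) < m
        · rw [h1 p hpm]
        · push_neg at hpm
          by_cases hpN : (p : ℕ) ≤ N
          · exact ih p hpN
          · have hpv : (p : ℕ) = N + 1 := by omega
            by_cases hpm2 : (p : ℕ) = m
            · have := h2 p hpm; omega
            · have hn := p.isLt
              have hp'lt : (⟨(p : ℕ) - 1, by omega⟩ : Fin n) < p := by
                rw [Fin.lt_def]; simp; omega
              have h4 : d ⟨(p : ℕ) - 1, by omega⟩ < d p := h3 _ p (by simp; omega) hp'lt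
              have h5 := ih ⟨(p : ℕ) - 1, by omega⟩ (by simp; omega)
              simp only [] at h5
              rw [Fin.lt_def] at h4
              simp at h5
              omega
    exact key n p p.isLt.le
  have hfix' : ∀ p : Fin n, (p : ℕ) < m → c⁻¹ p = p := by
    intro p hp
    have := hfix p hp
    calc c⁻¹ p = c⁻¹ (c p) := by rw [this]
    _ = p := by simp
  have hmaps' : ∀ p : Fin n, m ≤ (p : ℕ) → m ≤ ((c⁻¹ p : Fin n) : ℕ) := by
    intro p hp
    by_contra h
    push_neg at h
    have := hfix _ h
    rw [show ∀ q, c (c⁻¹ q) = q from fun q => Equiv.apply_symm_apply c q] at this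
    have : (p : ℕ) = ((c⁻¹ p : Fin n) : ℕ) := by rw [← this]
    omega
  have hmono' : ∀ p q : Fin n, m ≤ (p : ℕ) → p < q → c⁻¹ p < c⁻¹ q := by
    intro p q hp hpq
    rcases lt_trichotomy (c⁻¹ p) (c⁻¹ q) with h | h | h
    · exact h
    · exfalso; have := congrArg c h; simp at this; exact absurd this (ne_of_lt hpq)
    · exfalso
      have hq : m ≤ ((c⁻¹ q : Fin n) : ℕ) := hmaps' q (by omega)
      have := hmono _ _ hq h
      simp at this
      exact absurd hpq (not_lt.mpr this.le)
  have h1 := gen c hfix hmaps hmono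
  have h2 := gen c⁻¹ hfix' hmaps' hmono'
  have : ∀ p : Fin n, c⁻¹ p = p := by
    intro p
    have ha := h2 p
    have hb := h1 (c⁻¹ p)
    rw [show ∀ q, c (c⁻¹ q) = q from fun q => Equiv.apply_symm_apply c q] at hb
    exact Fin.ext (by omega)
  have : c⁻¹ = 1 := Equiv.ext this
  calc c = (c⁻¹)⁻¹ := by simp
  _ = 1 := by rw [this]; simp

lemma good_unique {n m : ℕ} (hm : m ≤ n) (a : Fin m → Fin n) (τ : Equiv.Perm (Fin n))
    {ρ ρ' : Equiv.Perm (Fin n)} (hρ : ρ ∈ topkFinset hm a) (hρ' : ρ' ∈ topkFinset hm a)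
    (hg : ∀ x y : Fin n, (∀ i, a i ≠ x) → (∀ i, a i ≠ y) → (ρ⁻¹ x < ρ⁻¹ y ↔ τ⁻¹ x < τ⁻¹ y))
    (hg' : ∀ x y : Fin n, (∀ i, a i ≠ x) → (∀ i, a i ≠ y) → (ρ'⁻¹ x < ρ'⁻¹ y ↔ τ⁻¹ x < τ⁻¹ y)) :
    ρ = ρ' := by
  have hc : ρ'⁻¹ * ρ = 1 := by
    apply perm_eq_one (m := m)
    · intro p hp
      rw [Equiv.Perm.mul_apply]
      have hcast : Fin.castLE hm ⟨(p : ℕ), hp⟩ = p := by apply Fin.ext; simp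
      have h1 : ρ (Fin.castLE hm ⟨(p : ℕ), hp⟩) = a ⟨(p : ℕ), hp⟩ := mem_topk_iff.mp hρ _
      rw [hcast] at h1
      rw [h1, inv_apply_a hρ', hcast]
    · intro p hp
      rw [Equiv.Perm.mul_apply]
      exact inv_ge hρ' (apply_notin hρ hp)
    · intro p q hp hpq
      rw [Equiv.Perm.mul_apply, Equiv.Perm.mul_apply]
      have hq : m ≤ (q : ℕ) := le_of_lt (lt_of_le_of_lt hp hpq)
      have hx := apply_notin hρ hp
      have hy := apply_notin hρ hq
      have h1 := hg (ρ p) (ρ q) hx hy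
      have h2 := hg' (ρ p) (ρ q) hx hy
      simp only [show ∀ q, ρ⁻¹ (ρ q) = q from fun q => Equiv.symm_apply_apply ρ q] at h1
      exact h2.mpr (h1.mp hpq)
  exact (inv_mul_eq_one.mp hc).symm

lemma exists_good {n m : ℕ} (hm : m ≤ n) (a : Fin m → Fin n) (ha : Function.Injective a)
    (τ : Equiv.Perm (Fin n)) :
    ∃ ρ, ρ ∈ topkFinset hm a ∧ ∀ x y : Fin n, (∀ i, a i ≠ x) → (∀ i, a i ≠ y) →
      ((ρ⁻¹ x < ρ⁻¹ y) ↔ (τ⁻¹ x < τ⁻¹ y)) := by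
  classical
  set T : Finset (Fin n) := (Finset.image a Finset.univ)ᶜ with hT
  have hTcard : T.card = n - m := by
    simp [hT, Finset.card_compl, Finset.card_image_of_injective _ ha]
  set S : Finset (Fin n) := T.image (fun z => τ⁻¹ z) with hS
  have hScard : S.card = n - m := by
    rw [hS, Finset.card_image_of_injective _ (fun u v h => τ⁻¹.injective h), hTcard]
  set e := S.orderIsoOfFin hScard with he
  have hmemT : ∀ j, τ ((e j : Fin n)) ∈ T := by
    intro j
    obtain ⟨t, ht, h⟩ := Finset.mem_image.mp (show (e j : Fin n) ∈ S from (e j).2)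
    have h2 : τ ((e j : Fin n)) = t := by rw [← h]; simp
    exact h2 ▸ ht
  have hnotin : ∀ j, ∀ i, a i ≠ τ ((e j : Fin n)) := by
    intro j i hcon
    have := hmemT j
    rw [hT, Finset.mem_compl] at this
    exact this (Finset.mem_image.mpr ⟨i, Finset.mem_univ i, hcon⟩)
  set f : Fin n → Fin n := fun p =>
    if h : (p : ℕ) < m then a ⟨p, h⟩
    else τ ((e ⟨(p : ℕ) - m, by have := p.isLt; omega⟩ : Fin n)) with hf
  have hinj : Function.Injective f := by
    intro p q h
    rw [hf] at h
    dsimp only at h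
    split_ifs at h with hp hq hq
    · have := ha h
      have := congrArg Fin.val this
      simp at this
      exact Fin.ext this
    · exact absurd h (hnotin _ _)
    · exact absurd h.symm (hnotin _ _)
    · have h2 := τ.injective h
      have h3 : (⟨(p : ℕ) - m, by have := p.isLt; omega⟩ : Fin (n - m)) =
          ⟨(q : ℕ) - m, by have := q.isLt; omega⟩ := by
        apply e.injective
        exact Subtype.coe_injective h2
      have := congrArg Fin.val h3
      simp at this
      apply Fin.ext
      omega
  set ρ : Equiv.Perm (Fin n) := Equiv.ofBijective f (Finite.injective_iff_bijective.mp hinj) with hρ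
  have hρapp : ∀ p, ρ p = f p := fun p => rfl
  have hmem : ρ ∈ topkFinset hm a := by
    rw [mem_topk_iff]
    intro i
    rw [hρapp, hf]
    have hi : ((Fin.castLE hm i : Fin n) : ℕ) < m := by simp
    simp only [dif_pos hi]
    exact congrArg a (Fin.ext (by simp))
  refine ⟨ρ, hmem, ?_⟩
  have key : ∀ p : Fin n, (hp : m ≤ (p : ℕ)) →
      (τ⁻¹ (ρ p) : Fin n) = (e ⟨(p : ℕ) - m, by have := p.isLt; omega⟩ : Fin n) := by
    intro p hp
    rw [hρapp, hf]
    simp only [dif_neg (not_lt.mpr hp)]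
    simp
  intro x y hx hy
  have hpx : m ≤ ((ρ⁻¹ x : Fin n) : ℕ) := inv_ge hmem hx
  have hpy : m ≤ ((ρ⁻¹ y : Fin n) : ℕ) := inv_ge hmem hy
  have hx2 : τ⁻¹ x = (e ⟨((ρ⁻¹ x : Fin n) : ℕ) - m, by have := (ρ⁻¹ x).isLt; omega⟩ : Fin n) := by
    conv_lhs => rw [← (Equiv.apply_symm_apply ρ x : ρ (ρ⁻¹ x) = x)]
    exact key _ hpx
  have hy2 : τ⁻¹ y = (e ⟨((ρ⁻¹ y : Fin n) : ℕ) - m, by have := (ρ⁻¹ y).isLt; omega⟩ : Fin n) := by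
    conv_lhs => rw [← (Equiv.apply_symm_apply ρ y : ρ (ρ⁻¹ y) = y)]
    exact key _ hpy
  rw [hx2, hy2]
  have : ∀ u v : {z // z ∈ S}, ((u : Fin n) < (v : Fin n)) ↔ u < v := fun u v => Iff.rfl
  rw [this]
  rw [e.lt_iff_lt]
  constructor
  · intro h
    rw [Fin.lt_def] at h ⊢
    simp only []
    omega
  · intro h
    rw [Fin.lt_def] at h ⊢
    simp only [] at h
    omega

lemma head_cmp {n m : ℕ} {hm : m ≤ n} {a : Fin m → Fin n} {ρ ρ' : Equiv.Perm (Fin n)}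
    (hρ : ρ ∈ topkFinset hm a) (hρ' : ρ' ∈ topkFinset hm a) {x y : Fin n}
    (hxy : (∃ i, a i = x) ∨ (∃ i, a i = y)) :
    (ρ⁻¹ x < ρ⁻¹ y ↔ ρ'⁻¹ x < ρ'⁻¹ y) := by
  classical
  by_cases hx : ∃ i, a i = x
  · obtain ⟨i, rfl⟩ := hx
    rw [inv_apply_a hρ, inv_apply_a hρ']
    by_cases hy : ∃ j, a j = y
    · obtain ⟨j, rfl⟩ := hy
      rw [inv_apply_a hρ, inv_apply_a hρ']
    · push_neg at hy
      have h1 := inv_ge hρ hy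
      have h2 := inv_ge hρ' hy
      have hi : ((Fin.castLE hm i : Fin n) : ℕ) < m := by simp
      constructor <;> intro <;> (rw [Fin.lt_def]; omega)
  · have hy : ∃ j, a j = y := hxy.resolve_left hx
    obtain ⟨j, rfl⟩ := hy
    push_neg at hx
    rw [inv_apply_a hρ, inv_apply_a hρ']
    have h1 := inv_ge hρ hx
    have h2 := inv_ge hρ' hx
    have hj : ((Fin.castLE hm j : Fin n) : ℕ) < m := by simp
    constructor <;> intro h <;> (exfalso; rw [Fin.lt_def] at h; omega)

lemma good_pr {n m : ℕ} (hm : m ≤ n) (a : Fin m → Fin n) (ha : Function.Injective a)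
    (pr : Equiv.Perm (Fin n) → Equiv.Perm (Fin n))
    (hpr : ∀ τ, pr τ ∈ topkFinset hm a ∧
      ∀ ρ ∈ topkFinset hm a, kendallDist (pr τ) τ ≤ kendallDist ρ τ)
    (τ : Equiv.Perm (Fin n)) :
    ∀ x y : Fin n, (∀ i, a i ≠ x) → (∀ i, a i ≠ y) →
      ((pr τ)⁻¹ x < (pr τ)⁻¹ y ↔ τ⁻¹ x < τ⁻¹ y) := by
  classical
  obtain ⟨ρs, hρs, hρsg⟩ := exists_good hm a ha τ
  set Q : Fin n × Fin n → Prop := fun p => (∃ i, a i = p.1) ∨ (∃ i, a i = p.2) with hQ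
  have hdec : ∀ ρ : Equiv.Perm (Fin n), kendallDist ρ τ =
      (Finset.univ.filter (fun p : Fin n × Fin n =>
        (p.1 < p.2 ∧ ¬((ρ⁻¹ p.1 < ρ⁻¹ p.2) ↔ (τ⁻¹ p.1 < τ⁻¹ p.2))) ∧ Q p)).card +
      (Finset.univ.filter (fun p : Fin n × Fin n =>
        (p.1 < p.2 ∧ ¬((ρ⁻¹ p.1 < ρ⁻¹ p.2) ↔ (τ⁻¹ p.1 < τ⁻¹ p.2))) ∧ ¬ Q p)).card := by
    intro ρ
    rw [kendallDist]
    rw [← Finset.card_filter_add_card_filter_not (p := Q)]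
    congr 1 <;> rw [Finset.filter_filter]
  have hA : (Finset.univ.filter (fun p : Fin n × Fin n =>
        (p.1 < p.2 ∧ ¬(((pr τ)⁻¹ p.1 < (pr τ)⁻¹ p.2) ↔ (τ⁻¹ p.1 < τ⁻¹ p.2))) ∧ Q p)) =
      (Finset.univ.filter (fun p : Fin n × Fin n =>
        (p.1 < p.2 ∧ ¬((ρs⁻¹ p.1 < ρs⁻¹ p.2) ↔ (τ⁻¹ p.1 < τ⁻¹ p.2))) ∧ Q p)) := by
    apply Finset.filter_congr
    intro p _
    by_cases hq : Q p
    · have hcmp := head_cmp (hpr τ).1 hρs (x := p.1) (y := p.2) hq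
      simp only [hq, and_true]
      rw [hcmp]
    · simp [hq]
  have hDs : (Finset.univ.filter (fun p : Fin n × Fin n =>
        (p.1 < p.2 ∧ ¬((ρs⁻¹ p.1 < ρs⁻¹ p.2) ↔ (τ⁻¹ p.1 < τ⁻¹ p.2))) ∧ ¬ Q p)) = ∅ := by
    rw [Finset.filter_eq_empty_iff]
    intro p _
    intro hcon
    obtain ⟨⟨_, hniff⟩, hnq⟩ := hcon
    simp only [hQ, not_or, not_exists] at hnq
    obtain ⟨hq1, hq2⟩ := hnq
    exact hniff (hρsg p.1 p.2 hq1 hq2)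
  have hle := (hpr τ).2 ρs hρs
  rw [hdec (pr τ), hdec ρs, hA, hDs] at hle
  simp only [Finset.card_empty, add_zero, add_le_iff_nonpos_right, Nat.le_zero,
    Finset.card_eq_zero] at hle
  have hD : ∀ x y : Fin n, x < y → (∀ i, a i ≠ x) → (∀ i, a i ≠ y) →
      ((pr τ)⁻¹ x < (pr τ)⁻¹ y ↔ τ⁻¹ x < τ⁻¹ y) := by
    intro x y hxy hx hy
    by_contra hcon
    have hmem : (x, y) ∈ (Finset.univ.filter (fun p : Fin n × Fin n =>
        (p.1 < p.2 ∧ ¬(((pr τ)⁻¹ p.1 < (pr τ)⁻¹ p.2) ↔ (τ⁻¹ p.1 < τ⁻¹ p.2))) ∧ ¬ Q p)) := by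
      rw [Finset.mem_filter]
      refine ⟨Finset.mem_univ _, ⟨⟨hxy, hcon⟩, ?_⟩⟩
      simp only [hQ, not_or, not_exists]
      exact ⟨hx, hy⟩
    rw [hle] at hmem
    exact absurd hmem (Finset.notMem_empty _)
  intro x y hx hy
  rcases lt_trichotomy x y with h | h | h
  · exact hD x y h hx hy
  · subst h
    simp
  · have := hD y x h hy hx
    have h1 : (pr τ)⁻¹ x ≠ (pr τ)⁻¹ y := fun hc => (ne_of_gt h) (by
      have := (pr τ)⁻¹.injective hc; exact this)
    have h2 : τ⁻¹ x ≠ τ⁻¹ y := fun hc => (ne_of_gt h) (τ⁻¹.injective hc)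
    exact lt_flip this h1 h2

lemma revAfter_apply_lt {n k : ℕ} {p : Fin n} (h : (p : ℕ) < k) : revAfter n k p = p := by
  simp [revAfter, Function.Involutive.toPerm, h]

lemma revAfter_apply_ge {n k : ℕ} {p : Fin n} (h : k ≤ (p : ℕ)) :
    ((revAfter n k p : Fin n) : ℕ) = n + k - 1 - (p : ℕ) := by
  simp [revAfter, Function.Involutive.toPerm, not_lt.mpr h]

lemma revAfter_inv {n k : ℕ} : (revAfter n k)⁻¹ = revAfter n k := by
  show (revAfter n k).symm = revAfter n k
  exact Function.Involutive.toPerm_symm _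

theorem antithetic_proj_comm {n l m : ℕ} (hlm : l ≤ m) (hm : m ≤ n)
    (a : Fin m → Fin n) (ha : Function.Injective a)
    (pr : Equiv.Perm (Fin n) → Equiv.Perm (Fin n))
    (hpr : ∀ τ, pr τ ∈ topkFinset hm a ∧
      ∀ ρ ∈ topkFinset hm a, kendallDist (pr τ) τ ≤ kendallDist ρ τ)
    (σ : Equiv.Perm (Fin n))
    (hσ : σ ∈ topkFinset (hlm.trans hm) (a ∘ Fin.castLE hlm)) :
    antithetic n m (pr σ) = pr (antithetic n l σ) := by
  have g1mem := (hpr σ).1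
  have g1 := good_pr hm a ha pr hpr σ
  have g2mem := (hpr (antithetic n l σ)).1
  have g2 := good_pr hm a ha pr hpr (antithetic n l σ)
  apply good_unique hm a (antithetic n l σ) _ g2mem _ g2
  · -- membership of antithetic n m (pr σ)
    rw [mem_topk_iff]
    intro i
    rw [antithetic, Equiv.Perm.mul_apply]
    rw [revAfter_apply_lt (by simp)]
    exact mem_topk_iff.mp g1mem i
  · -- tail condition
    intro x y hx hy
    have hu : m ≤ (((pr σ)⁻¹ x : Fin n) : ℕ) := inv_ge g1mem hx
    have hv : m ≤ (((pr σ)⁻¹ y : Fin n) : ℕ) := inv_ge g1mem hy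
    have hs : l ≤ ((σ⁻¹ x : Fin n) : ℕ) := inv_ge hσ (fun i => hx (Fin.castLE hlm i))
    have ht : l ≤ ((σ⁻¹ y : Fin n) : ℕ) := inv_ge hσ (fun i => hy (Fin.castLE hlm i))
    have hlhs : ∀ z : Fin n, (antithetic n m (pr σ))⁻¹ z = revAfter n m ((pr σ)⁻¹ z) := by
      intro z
      rw [antithetic, mul_inv_rev, Equiv.Perm.mul_apply, revAfter_inv]
    have hrhs : ∀ z : Fin n, (antithetic n l σ)⁻¹ z = revAfter n l (σ⁻¹ z) := by
      intro z
      rw [antithetic, mul_inv_rev, Equiv.Perm.mul_apply, revAfter_inv]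
    rw [hlhs x, hlhs y, hrhs x, hrhs y]
    have e1 := revAfter_apply_ge hu
    have e2 := revAfter_apply_ge hv
    have e3 := revAfter_apply_ge hs
    have e4 := revAfter_apply_ge ht
    have hmid := g1 y x hy hx
    rw [Fin.lt_def, Fin.lt_def, e1, e2, e3, e4]
    rw [Fin.lt_def, Fin.lt_def] at hmid
    have b1 := (((pr σ)⁻¹ x : Fin n)).isLt
    have b2 := (((pr σ)⁻¹ y : Fin n)).isLt
    have b3 := ((σ⁻¹ x : Fin n)).isLt
    have b4 := ((σ⁻¹ y : Fin n)).isLt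
    constructor
    · intro h
      have : ((σ⁻¹ y : Fin n) : ℕ) < ((σ⁻¹ x : Fin n) : ℕ) := hmid.mp (by omega)
      omega
    · intro h
      have : (((pr σ)⁻¹ y : Fin n) : ℕ) < (((pr σ)⁻¹ x : Fin n) : ℕ) := hmid.mpr (by omega)
      omega
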